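/- Suppose L satisfies the exponential monotonicity condition and N satisfies the forward-Euler condition with step bound h_FE > 0. Given u^n ∈ E and Δt with 0 ≤ Δt ≤ (3/4) h_FE, define u^{(1)} = (1/2) • exp((2/3) Δt • L) u^n + (1/2) • exp((2/3) Δt • L)(u^n + (4/3) Δt • N(u^n)), u^{(2)} = (2/3) • exp((2/3) Δt • L) u^n + (1/3) • (u^{(1)} + (4/3) Δt • N(u^{(1)})), and u^{n+1} = (59/128) • exp(Δt • L) u^n + (15/128) • exp(Δt • L)(u^n + (4/3) Δt • N(u^n)) + (27/64) • exp((1/3) Δt • L)(u^{(2)} + (4/3) Δt • N(u^{(2)})). Then f(u^{n+1}) ≤ f(u^n). -/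

import Mathlib

private lemma conv2_aux {E : Type*} [NormedAddCommGroup E] [NormedSpace ℝ E]
    (f : E → ℝ) (hf_conv : ConvexOn ℝ Set.univ f)
    {a b M : ℝ} {x y : E} (ha : 0 ≤ a) (hb : 0 ≤ b) (hab : a + b = 1)
    (hx : f x ≤ M) (hy : f y ≤ M) : f (a • x + b • y) ≤ M := by
  calc f (a • x + b • y) ≤ a * f x + b * f y :=
        hf_conv.2 (Set.mem_univ x) (Set.mem_univ y) ha hb hab
    _ ≤ a * M + b * M := by
        gcongr <;> assumption
    _ = M := by rw [← add_mul, hab, one_mul]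

/-- **Strong stability of the third-order SSP integrating factor Runge–Kutta
method based on eSSPRK⁺(3,3) (SSP coefficient 3/4).**
If `L` satisfies the exponential monotonicity condition, `N` satisfies the
forward-Euler condition with step bound `hFE > 0`, and `0 ≤ Δt ≤ (3/4) hFE`,
then the update of the method satisfies `f uⁿ⁺¹ ≤ f uⁿ`. -/
theorem ssp_integratingFactor_eSSPRKplus33
    {E : Type*} [NormedAddCommGroup E] [NormedSpace ℝ E] [FiniteDimensional ℝ E]
    (f : E → ℝ) (hf_cont : Continuous f) (hf_conv : ConvexOn ℝ Set.univ f)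
    (L : E →L[ℝ] E) (N : E → E)
    (hFE : ℝ) (hFE_pos : 0 < hFE)
    (hL : ∀ (τ : ℝ), 0 ≤ τ → ∀ u : E, f (NormedSpace.exp (τ • L) u) ≤ f u)
    (hN : ∀ u : E, ∀ τ : ℝ, 0 ≤ τ → τ ≤ hFE → f (u + τ • N u) ≤ f u)
    (un : E) (Δt : ℝ) (hΔt_nonneg : 0 ≤ Δt) (hΔt : Δt ≤ (3 / 4) * hFE)
    (u1 u2 unext : E)
    (hu1 : u1 = (1 / 2 : ℝ) • NormedSpace.exp (((2 / 3 : ℝ) * Δt) • L) un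
              + (1 / 2 : ℝ) • NormedSpace.exp (((2 / 3 : ℝ) * Δt) • L)
                  (un + ((4 / 3 : ℝ) * Δt) • N un))
    (hu2 : u2 = (2 / 3 : ℝ) • NormedSpace.exp (((2 / 3 : ℝ) * Δt) • L) un
              + (1 / 3 : ℝ) • (u1 + ((4 / 3 : ℝ) * Δt) • N u1))
    (hunext : unext = (59 / 128 : ℝ) • NormedSpace.exp (Δt • L) un
              + (15 / 128 : ℝ) • NormedSpace.exp (Δt • L)
                  (un + ((4 / 3 : ℝ) * Δt) • N un)
              + (27 / 64 : ℝ) • NormedSpace.exp (((1 / 3 : ℝ) * Δt) • L)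
                  (u2 + ((4 / 3 : ℝ) * Δt) • N u2)) :
    f unext ≤ f un := by
  -- the forward-Euler step with τ = (4/3) Δt is admissible
  have hτ0 : (0:ℝ) ≤ (4 / 3 : ℝ) * Δt := by positivity
  have hτh : (4 / 3 : ℝ) * Δt ≤ hFE := by linarith
  have hFEstep : ∀ u : E, f (u + ((4 / 3 : ℝ) * Δt) • N u) ≤ f u :=
    fun u => hN u _ hτ0 hτh
  -- stage bounds
  have h23 : (0:ℝ) ≤ (2 / 3 : ℝ) * Δt := by positivity
  have h13 : (0:ℝ) ≤ (1 / 3 : ℝ) * Δt := by positivity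
  have hfu1 : f u1 ≤ f un := by
    rw [hu1]
    exact conv2_aux f hf_conv (by norm_num) (by norm_num) (by norm_num)
      (hL _ h23 un)
      ((hL _ h23 _).trans (hFEstep un))
  have hfu2 : f u2 ≤ f un := by
    rw [hu2]
    exact conv2_aux f hf_conv (by norm_num) (by norm_num) (by norm_num)
      (hL _ h23 un)
      ((hFEstep u1).trans hfu1)
  -- final step: group the first two terms
  have hre : unext = (74 / 128 : ℝ) •
      ((59 / 74 : ℝ) • NormedSpace.exp (Δt • L) un
        + (15 / 74 : ℝ) • NormedSpace.exp (Δt • L)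
            (un + ((4 / 3 : ℝ) * Δt) • N un))
      + (54 / 128 : ℝ) • NormedSpace.exp (((1 / 3 : ℝ) * Δt) • L)
          (u2 + ((4 / 3 : ℝ) * Δt) • N u2) := by
    rw [hunext]; module
  rw [hre]
  refine conv2_aux f hf_conv (by norm_num) (by norm_num) (by norm_num) ?_ ?_
  · exact conv2_aux f hf_conv (by norm_num) (by norm_num) (by norm_num)
      (hL _ hΔt_nonneg un)
      ((hL _ hΔt_nonneg _).trans (hFEstep un))
  · exact (hL _ h13 _).trans ((hFEstep u2).trans hfu2)
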